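/- Let V be a finite ground set, let f : Finset V → ℝ be a submodular function, and let X ⊆ V be such that f is monotone when restricted to subsets of X (i.e., f(A) ≤ f(B) whenever A ⊆ B ⊆ X). Let T, S ⊆ X, let p ∈ [0,1], and let R be a random subset of T (given by any probability distribution μ on Finset V supported on subsets of T) in which every element of T occurs with probability at least p. Then E[f(R ∪ S)] ≥ p·f(T ∪ S) + (1 − p)·f(S). -/

import Mathlib

theorem stmt4_aux {V : Type*} [Fintype V] [DecidableEq V]
    (f : Finset V → ℝ)
    (hsub : ∀ A B : Finset V, A ⊆ B → ∀ e ∉ B,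
      f (insert e A) - f A ≥ f (insert e B) - f B)
    (X : Finset V)
    (hmono : ∀ A B : Finset V, A ⊆ B → B ⊆ X → f A ≤ f B)
    (S : Finset V) (hS : S ⊆ X)
    (p : ℝ) (hp : p ∈ Set.Icc (0:ℝ) 1) :
    ∀ T : Finset V, T ⊆ X →
    ∀ μ : Finset V → ℝ, (∀ R, 0 ≤ μ R) →
    (∑ R ∈ T.powerset, μ R = 1) →
    (∀ e ∈ T, p ≤ ∑ R ∈ T.powerset, (if e ∈ R then μ R else 0)) →
    ∑ R ∈ T.powerset, μ R * f (R ∪ S) ≥ p * f (T ∪ S) + (1 - p) * f S := by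
  intro T
  induction T using Finset.induction_on with
  | empty =>
    intro _ μ hμ0 hμ1 _
    simp only [Finset.powerset_empty, Finset.sum_singleton, Finset.empty_union] at *
    rw [hμ1]; ring_nf; simp
  | @insert e T' he ih =>
    intro hTX μ hμ0 hμ1 hmarg
    have hT'X : T' ⊆ X := fun x hx => hTX (Finset.mem_insert_of_mem hx)
    have heX : e ∈ X := hTX (Finset.mem_insert_self e T')
    set μ' : Finset V → ℝ := fun Q => μ Q + μ (insert e Q) with hμ'def
    have hμ'0 : ∀ R, 0 ≤ μ' R := fun R => add_nonneg (hμ0 R) (hμ0 _)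
    have hμ'1 : ∑ R ∈ T'.powerset, μ' R = 1 := by
      rw [← hμ1, Finset.sum_powerset_insert he, Finset.sum_add_distrib]
    have hmarg' : ∀ e' ∈ T', p ≤ ∑ R ∈ T'.powerset, (if e' ∈ R then μ' R else 0) := by
      intro e' he'
      have hne : e' ≠ e := fun h => he (h ▸ he')
      have := hmarg e' (Finset.mem_insert_of_mem he')
      rw [Finset.sum_powerset_insert he] at this
      calc p ≤ _ := this
        _ = ∑ R ∈ T'.powerset, (if e' ∈ R then μ' R else 0) := by
          rw [← Finset.sum_add_distrib]
          refine Finset.sum_congr rfl fun Q hQ => ?_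
          by_cases h : e' ∈ Q <;> simp [h, Finset.mem_insert, hne, hμ'def]
    -- probability that e ∈ R
    have hpe : p ≤ ∑ Q ∈ T'.powerset, μ (insert e Q) := by
      have h := hmarg e (Finset.mem_insert_self e T')
      rw [Finset.sum_powerset_insert he] at h
      have h0 : ∑ t ∈ T'.powerset, (if e ∈ t then μ t else 0) = 0 :=
        Finset.sum_eq_zero fun Q hQ =>
          if_neg (fun hh => he (Finset.mem_powerset.mp hQ hh))
      have h1 : ∑ t ∈ T'.powerset, (if e ∈ insert e t then μ (insert e t) else 0)
          = ∑ t ∈ T'.powerset, μ (insert e t) :=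
        Finset.sum_congr rfl fun Q _ => if_pos (Finset.mem_insert_self e Q)
      rw [h0, h1, zero_add] at h
      exact h
    set d : ℝ := f (insert e T' ∪ S) - f (T' ∪ S) with hd
    have hd0 : 0 ≤ d := by
      have := hmono (T' ∪ S) (insert e T' ∪ S)
        (Finset.union_subset_union (Finset.subset_insert e T') subset_rfl)
        (Finset.union_subset hTX hS)
      linarith
    -- key pointwise inequality
    have hkey : ∀ Q ∈ T'.powerset, f (insert e Q ∪ S) ≥ f (Q ∪ S) + d := by
      intro Q hQ
      have hQT' : Q ⊆ T' := Finset.mem_powerset.mp hQ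
      by_cases heS : e ∈ S
      · have h1 : insert e Q ∪ S = Q ∪ S := by
          rw [Finset.insert_union]
          exact Finset.insert_eq_self.mpr (Finset.mem_union_right Q heS)
        have h2 : insert e T' ∪ S = T' ∪ S := by
          rw [Finset.insert_union]
          exact Finset.insert_eq_self.mpr (Finset.mem_union_right T' heS)
        rw [h1, hd, h2]; ring_nf; exact le_refl _
      · have heB : e ∉ T' ∪ S := by
          simp [Finset.mem_union, he, heS]
        have := hsub (Q ∪ S) (T' ∪ S) (Finset.union_subset_union hQT' subset_rfl) e heB
        have h1 : insert e Q ∪ S = insert e (Q ∪ S) := Finset.insert_union e Q S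
        have h2 : insert e T' ∪ S = insert e (T' ∪ S) := Finset.insert_union e T' S
        rw [h1, hd, h2]; linarith
    calc ∑ R ∈ (insert e T').powerset, μ R * f (R ∪ S)
        = ∑ Q ∈ T'.powerset, μ Q * f (Q ∪ S)
          + ∑ Q ∈ T'.powerset, μ (insert e Q) * f (insert e Q ∪ S) :=
          Finset.sum_powerset_insert he _
      _ ≥ ∑ Q ∈ T'.powerset, μ Q * f (Q ∪ S)
          + ∑ Q ∈ T'.powerset, μ (insert e Q) * (f (Q ∪ S) + d) := by
          exact add_le_add_right (Finset.sum_le_sum fun Q hQ =>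
            mul_le_mul_of_nonneg_left (hkey Q hQ) (hμ0 _)) _
      _ = ∑ Q ∈ T'.powerset, μ' Q * f (Q ∪ S)
          + d * ∑ Q ∈ T'.powerset, μ (insert e Q) := by
          rw [Finset.mul_sum, ← Finset.sum_add_distrib, ← Finset.sum_add_distrib]
          exact Finset.sum_congr rfl fun Q _ => by simp [hμ'def]; ring
      _ ≥ (p * f (T' ∪ S) + (1 - p) * f S) + d * p := by
          exact add_le_add (ih hT'X μ' hμ'0 hμ'1 hmarg')
            (mul_le_mul_of_nonneg_left hpe hd0)
      _ ≥ p * f (insert e T' ∪ S) + (1 - p) * f S := by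
          rw [hd]; ring_nf; exact le_refl _

/-- Let `f` be submodular and monotone when restricted to subsets of `X`,
let `T, S ⊆ X`, and let `R` be a random subset of `T` in which every element of `T`
occurs with probability at least `p`.  Then `E[f(R ∪ S)] ≥ p·f(T ∪ S) + (1 - p)·f(S)`. -/
theorem stmt4 {V : Type*} [Fintype V] [DecidableEq V]
    (f : Finset V → ℝ)
    (hsub : ∀ A B : Finset V, A ⊆ B → ∀ e ∉ B,
      f (insert e A) - f A ≥ f (insert e B) - f B)
    (X : Finset V)
    (hmono : ∀ A B : Finset V, A ⊆ B → B ⊆ X → f A ≤ f B)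
    (T S : Finset V) (hT : T ⊆ X) (hS : S ⊆ X)
    (p : ℝ) (hp : p ∈ Set.Icc (0:ℝ) 1)
    (μ : Finset V → ℝ)
    (hμ0 : ∀ R : Finset V, 0 ≤ μ R)
    (hμ1 : ∑ R : Finset V, μ R = 1)
    (hsupp : ∀ R : Finset V, ¬ R ⊆ T → μ R = 0)
    (hmarg : ∀ e ∈ T, p ≤ ∑ R : Finset V, (if e ∈ R then μ R else 0)) :
    ∑ R : Finset V, μ R * f (R ∪ S) ≥ p * f (T ∪ S) + (1 - p) * f S := by
  have hsubset : T.powerset ⊆ (Finset.univ : Finset (Finset V)) :=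
    Finset.subset_univ _
  have key : ∀ g : Finset V → ℝ,
      ∑ R : Finset V, μ R * g R = ∑ R ∈ T.powerset, μ R * g R := by
    intro g
    rw [← Finset.sum_subset hsubset]
    intro R _ hR
    rw [hsupp R (fun h => hR (Finset.mem_powerset.mpr h)), zero_mul]
  have hμ1' : ∑ R ∈ T.powerset, μ R = 1 := by
    rw [← hμ1, ← Finset.sum_subset hsubset]
    intro R _ hR
    exact hsupp R (fun h => hR (Finset.mem_powerset.mpr h))
  have hmarg' : ∀ e ∈ T, p ≤ ∑ R ∈ T.powerset, (if e ∈ R then μ R else 0) := by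
    intro e heT
    have hz : ∀ R ∈ (Finset.univ : Finset (Finset V)), R ∉ T.powerset →
        (if e ∈ R then μ R else 0) = 0 := by
      intro R _ hR
      rw [hsupp R (fun h => hR (Finset.mem_powerset.mpr h))]
      simp
    rw [Finset.sum_subset hsubset hz]
    exact hmarg e heT
  rw [key (fun R => f (R ∪ S))]
  exact stmt4_aux f hsub X hmono S hS p hp T hT μ hμ0 hμ1' hmarg'
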